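/- Assume in addition p ≡ 1 (mod 4), q ≡ 3 (mod 4) and (|q − p| + 1)² < pq. Then the 2-adic complexity of the balanced Whiteman generalized cyclotomic sequence s satisfies Φ₂(s) ≥ pq − p − q − 1. -/

import Mathlib

open Finset

private lemma pow_eq_pow_of_mod_eq {M : Type*} [Monoid M] {c : M} {n : ℕ} (h : c ^ n = 1)
    {a b : ℕ} (hab : a % n = b % n) : c ^ a = c ^ b := by
  have key : ∀ m : ℕ, c ^ m = c ^ (m % n) := by
    intro m
    conv_lhs => rw [← Nat.div_add_mod m n]
    rw [pow_add, pow_mul, h, one_pow, one_mul]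
  rw [key a, key b, hab]

private lemma sum_range_zmod {M : Type*} [AddCommMonoid M] (n : ℕ) [NeZero n] (F : ℕ → M) :
    ∑ i ∈ range n, F i = ∑ a : ZMod n, F a.val := by
  refine Finset.sum_nbij' (fun i => ((i : ℕ) : ZMod n)) (fun a => a.val) ?_ ?_ ?_ ?_ ?_
  · intro a _; exact mem_univ _
  · intro a _; exact mem_range.mpr (ZMod.val_lt a)
  · intro a ha; exact ZMod.val_cast_of_lt (mem_range.mp ha)
  · intro a _; simp [ZMod.natCast_val, ZMod.cast_id]
  · intro a ha; rw [ZMod.val_cast_of_lt (mem_range.mp ha)]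

private lemma primroot_ne_zero {p : ℕ} [hp : Fact p.Prime] {g : ZMod p}
    (hg : IsPrimitiveRoot g (p - 1)) : g ≠ 0 := by
  intro h
  have h2 := hp.out.two_le
  have := hg.pow_eq_one
  rw [h, zero_pow (by omega)] at this
  exact zero_ne_one this

private lemma exists_dlog {p : ℕ} [hp : Fact p.Prime] {g : ZMod p}
    (hg : IsPrimitiveRoot g (p - 1)) {n : ZMod p} (hn : n ≠ 0) : ∃ a : ℕ, g ^ a = n := by
  obtain ⟨u, hu⟩ := (primroot_ne_zero hg).isUnit
  have hou : orderOf u = p - 1 := by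
    have h1 := hg.eq_orderOf
    rw [← hu, orderOf_units] at h1
    exact h1.symm
  have hcard : Fintype.card (ZMod p)ˣ = p - 1 := by
    rw [ZMod.card_units_eq_totient, Nat.totient_prime hp.out]
  obtain ⟨v, hv⟩ := hn.isUnit
  have htop : Subgroup.zpowers u = ⊤ := by
    apply Subgroup.eq_top_of_card_eq
    rw [Nat.card_zpowers, hou, Nat.card_eq_fintype_card, hcard]
  have hvmem : v ∈ Submonoid.powers u := by
    rw [mem_powers_iff_mem_zpowers, htop]; trivial
  obtain ⟨a, ha⟩ := hvmem
  have ha' : u ^ a = v := ha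
  exact ⟨a, by rw [← hu, ← hv, ← ha', Units.val_pow_eq_pow_val]⟩

private lemma quadChar_primroot {p : ℕ} [hp : Fact p.Prime] (hp2 : p ≠ 2) {g : ZMod p}
    (hg : IsPrimitiveRoot g (p - 1)) : quadraticChar (ZMod p) g = -1 := by
  have hp3 : 3 ≤ p := by
    have := hp.out.two_le; omega
  have hpe : 2 ∣ p - 1 := by
    obtain ⟨k, hk⟩ := hp.out.odd_of_ne_two hp2
    omega
  rw [quadraticChar_neg_one_iff_not_isSquare]
  rintro ⟨c, hc⟩
  have hc0 : c ≠ 0 := by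
    rintro rfl
    exact primroot_ne_zero hg (by simpa using hc)
  have h1 : g ^ ((p - 1) / 2) = 1 := by
    rw [hc, ← sq, ← pow_mul, show 2 * ((p - 1) / 2) = p - 1 by omega]
    exact ZMod.pow_card_sub_one_eq_one hc0
  have hdvd := (hg.pow_eq_one_iff_dvd _).mp h1
  have := Nat.le_of_dvd (by omega) hdvd
  omega

private lemma quadChar_pow {p : ℕ} [hp : Fact p.Prime] (hp2 : p ≠ 2) {g : ZMod p}
    (hg : IsPrimitiveRoot g (p - 1)) (a : ℕ) :
    quadraticChar (ZMod p) (g ^ a) = (-1) ^ a := by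
  rw [map_pow, quadChar_primroot hp2 hg]

private lemma dvd_mul_prime_cases {o p q : ℕ} (hp : p.Prime) (hq : q.Prime) (hpq : p ≠ q)
    (ho : o ∣ p * q) : o = 1 ∨ o = p ∨ o = q ∨ o = p * q := by
  have hcop : Nat.Coprime p q := (Nat.coprime_primes hp hq).mpr hpq
  by_cases hpo : p ∣ o <;> by_cases hqo : q ∣ o
  · right; right; right
    exact Nat.dvd_antisymm ho (hcop.mul_dvd_of_dvd_of_dvd hpo hqo)
  · right; left
    obtain ⟨m, hm⟩ := hpo
    have hmq : m ∣ q := (mul_dvd_mul_iff_left hp.pos.ne').mp (hm ▸ ho)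
    rcases hq.eq_one_or_self_of_dvd m hmq with h | h
    · rw [hm, h, mul_one]
    · exact absurd (hm ▸ h ▸ (dvd_mul_left q p : q ∣ p * q)) hqo
  · right; right; left
    obtain ⟨m, hm⟩ := hqo
    have ho' : q * m ∣ q * p := by rw [← hm, mul_comm q p]; exact ho
    have hmp : m ∣ p := (mul_dvd_mul_iff_left hq.pos.ne').mp ho'
    rcases hp.eq_one_or_self_of_dvd m hmp with h | h
    · rw [hm, h, mul_one]
    · exact absurd (hm ▸ h ▸ (dvd_mul_left p q : p ∣ q * p)) hpo
  · left
    have h1 : Nat.Coprime o p := (Nat.Coprime.symm ((hp.coprime_iff_not_dvd).mpr hpo))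
    have h2 : Nat.Coprime o q := (Nat.Coprime.symm ((hq.coprime_iff_not_dvd).mpr hqo))
    exact Nat.Coprime.eq_one_of_dvd (Nat.Coprime.mul_right h1 h2) ho
/-- Solvability of membership in the Whiteman class `D i`. -/
private lemma mem_D_aux
    (p q : ℕ) (hp : p.Prime) (hq : q.Prime) (hpq : p ≠ q)
    (hpo : Odd p) (hqo : Odd q)
    (hgcd : Nat.gcd (p - 1) (q - 1) = 2)
    (g x e : ℕ)
    (hgp : IsPrimitiveRoot (g : ZMod p) (p - 1))
    (hgq : IsPrimitiveRoot (g : ZMod q) (q - 1))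
    (hxp : x % p = g % p) (hxq : x % q = 1)
    (he : e = (p - 1) * (q - 1) / 2)
    (i n a b : ℕ) (hi : i ≤ 1) (hn : n < p * q)
    (hnp : ((n : ZMod p)) = (g : ZMod p) ^ a) (hnq : ((n : ZMod q)) = (g : ZMod q) ^ b)
    (hpar : (a + i) % 2 = b % 2) :
    ∃ s0, s0 < e ∧ g ^ s0 * x ^ i % (p * q) = n := by
  have hp3 : 3 ≤ p := by
    obtain ⟨c, hc⟩ := hpo; have := hp.two_le; omega
  have hq3 : 3 ≤ q := by
    obtain ⟨c, hc⟩ := hqo; have := hq.two_le; omega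
  obtain ⟨p2, hp2'⟩ : ∃ p2, p - 1 = 2 * p2 := by
    obtain ⟨c, hc⟩ := hpo; exact ⟨c, by omega⟩
  obtain ⟨q2, hq2'⟩ : ∃ q2, q - 1 = 2 * q2 := by
    obtain ⟨c, hc⟩ := hqo; exact ⟨c, by omega⟩
  have hdvd_pe : (p - 1) ∣ e := by
    refine ⟨q2, ?_⟩
    rw [he, hp2', hq2']
    rw [show 2 * p2 * (2 * q2) = 2 * (2 * p2 * q2) by ring, Nat.mul_div_cancel_left _ two_pos]
  have hdvd_qe : (q - 1) ∣ e := by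
    refine ⟨p2, ?_⟩
    rw [he, hp2', hq2']
    rw [show 2 * p2 * (2 * q2) = 2 * (2 * q2 * p2) by ring, Nat.mul_div_cancel_left _ two_pos]
  have epos : 0 < e := by
    rw [he, hp2', hq2']
    have : 1 ≤ p2 := by omega
    have : 1 ≤ q2 := by omega
    calc 0 < 2 * p2 * q2 := by positivity
    _ = 2 * p2 * (2 * q2) / 2 := by
        rw [show 2 * p2 * (2 * q2) = 2 * (2 * p2 * q2) by ring, Nat.mul_div_cancel_left _ two_pos]
  set a1 := a + (p - 1) - i with ha1
  have hcond : a1 ≡ b [MOD Nat.gcd (p - 1) (q - 1)] := by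
    rw [hgcd]
    show a1 % 2 = b % 2
    omega
  obtain ⟨k, hk1, hk2⟩ := Nat.chineseRemainder' hcond
  set s0 := k % e with hs0
  refine ⟨s0, Nat.mod_lt _ epos, ?_⟩
  have hs0k : s0 ≡ k [MOD p - 1] ∧ s0 ≡ k [MOD q - 1] := by
    constructor
    · show s0 % (p - 1) = k % (p - 1)
      rw [hs0]; exact Nat.mod_mod_of_dvd k hdvd_pe
    · show s0 % (q - 1) = k % (q - 1)
      rw [hs0]; exact Nat.mod_mod_of_dvd k hdvd_qe
  -- mod p congruence
  have hxgp : (x : ZMod p) = (g : ZMod p) := by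
    rw [← ZMod.natCast_mod x p, hxp, ZMod.natCast_mod]
  have hmodp : (g ^ s0 * x ^ i : ℕ) ≡ n [MOD p] := by
    rw [← ZMod.natCast_eq_natCast_iff]
    push_cast
    rw [hxgp, hnp, ← pow_add]
    apply pow_eq_pow_of_mod_eq hgp.pow_eq_one
    have h1 : (s0 + i) ≡ a1 + i [MOD p - 1] := Nat.ModEq.add_right i (hs0k.1.trans hk1)
    have h2 : a1 + i = a + (p - 1) := by omega
    have h3 : s0 + i ≡ a [MOD p - 1] := by
      calc s0 + i ≡ a1 + i [MOD p - 1] := h1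
      _ = a + (p - 1) := h2
      _ ≡ a [MOD p - 1] := Nat.add_modEq_right
    exact h3
  have hmodq : (g ^ s0 * x ^ i : ℕ) ≡ n [MOD q] := by
    rw [← ZMod.natCast_eq_natCast_iff]
    push_cast
    have hxq1 : (x : ZMod q) = 1 := by
      rw [← ZMod.natCast_mod x q, hxq, Nat.cast_one]
    rw [hxq1, one_pow, mul_one, hnq]
    exact pow_eq_pow_of_mod_eq hgq.pow_eq_one (hs0k.2.trans hk2)
  have hcop : Nat.Coprime p q := (Nat.coprime_primes hp hq).mpr hpq
  have hmod : (g ^ s0 * x ^ i : ℕ) ≡ n [MOD p * q] :=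
    (Nat.modEq_and_modEq_iff_modEq_mul hcop).mp ⟨hmodp, hmodq⟩
  calc g ^ s0 * x ^ i % (p * q) = n % (p * q) := hmod
  _ = n := Nat.mod_eq_of_lt hn

/-- Membership in the cyclotomic class `Dp i` mod a single prime. -/
private lemma mem_Dp_aux (p : ℕ) (hp : p.Prime) (hpo : Odd p) (g : ℕ)
    (hgp : IsPrimitiveRoot (g : ZMod p) (p - 1))
    (i k a : ℕ) (hi : i ≤ 1) (hk : k < p)
    (hka : (k : ZMod p) = (g : ZMod p) ^ a) (hpar : a % 2 = i % 2) :
    ∃ t, t < (p - 1) / 2 ∧ g ^ (2 * t + i) % p = k := by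
  haveI : Fact p.Prime := ⟨hp⟩
  haveI : NeZero p := ⟨hp.pos.ne'⟩
  have hp3 : 3 ≤ p := by
    obtain ⟨c, hc⟩ := hpo; have := hp.two_le; omega
  obtain ⟨p2, hp2'⟩ : ∃ p2, p - 1 = 2 * p2 := by
    obtain ⟨c, hc⟩ := hpo; exact ⟨c, by omega⟩
  have hp2pos : 0 < p2 := by omega
  have hhalf : (p - 1) / 2 = p2 := by omega
  obtain ⟨a1, ha1⟩ : ∃ a1, a + (p - 1) - i = a1 := ⟨_, rfl⟩
  have ha1e : 2 * (a1 / 2) = a1 := by omega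
  obtain ⟨t, ht⟩ : ∃ t, a1 / 2 % p2 = t := ⟨_, rfl⟩
  obtain ⟨M, hM⟩ : ∃ M, p2 * (a1 / 2 / p2) = M := ⟨_, rfl⟩
  have htlt : t < p2 := by
    have := Nat.mod_lt (a1 / 2) hp2pos
    omega
  refine ⟨t, by omega, ?_⟩
  have hc : M + t = a1 / 2 := by
    rw [← hM, ← ht]; exact Nat.div_add_mod _ p2
  have h6 : (p - 1) * (a1 / 2 / p2) = 2 * M := by rw [hp2', mul_assoc, hM]
  have hEq : a + (p - 1) = 2 * M + (2 * t + i) := by omega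
  have hmodeq : (2 * t + i) % (p - 1) = a % (p - 1) := by
    rw [← Nat.add_mod_right a (p - 1), hEq, ← h6, Nat.mul_add_mod]
  have hzp : ((g ^ (2 * t + i) : ℕ) : ZMod p) = (k : ZMod p) := by
    push_cast
    rw [hka]
    exact pow_eq_pow_of_mod_eq hgp.pow_eq_one hmodeq
  have hv := congrArg ZMod.val hzp
  rwa [ZMod.val_natCast, ZMod.val_natCast, Nat.mod_eq_of_lt hk] at hv

private lemma comp_ne_one (p r : ℕ) [hpI : Fact p.Prime] [hrI : Fact r.Prime]
    (hp2 : p ≠ 2) (hr2 : r ≠ 2) :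
    (quadraticChar (ZMod p)).ringHomComp (Int.castRingHom (ZMod r)) ≠ 1 := by
  have hrc : ringChar (ZMod p) ≠ 2 := by rw [ZMod.ringChar_zmod_n]; exact hp2
  obtain ⟨a, ha⟩ := quadraticChar_exists_neg_one hrc
  have ha0 : a ≠ 0 := by
    rintro rfl
    rw [quadraticChar_zero] at ha
    exact absurd ha (by norm_num)
  intro h
  obtain ⟨u, hu⟩ := ha0.isUnit
  have h1 : ((quadraticChar (ZMod p)).ringHomComp (Int.castRingHom (ZMod r))) a = 1 := by
    rw [h, ← hu]; exact MulChar.one_apply_coe u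
  rw [MulChar.ringHomComp_apply, ha, eq_intCast] at h1
  push_cast at h1
  have h2 : ((2 : ℕ) : ZMod r) = 0 := by
    push_cast
    linear_combination -h1
  have h3 := (ZMod.natCast_eq_zero_iff 2 r).mp h2
  exact hr2 ((Nat.prime_dvd_prime_iff_eq hrI.out Nat.prime_two).mp h3)

private lemma sum_range_zmod' {M : Type*} [AddCommMonoid M] (n : ℕ) [NeZero n]
    (F : ℕ → M) (G : ZMod n → M) (h : ∀ a : ZMod n, F a.val = G a) :
    ∑ i ∈ range n, F i = ∑ a : ZMod n, G a := by
  rw [sum_range_zmod n F]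
  exact Finset.sum_congr rfl fun a _ => h a

/-- A quadratic-character sum against powers of a primitive `p`-th root of unity,
squared. -/
private lemma char_sum_sq (p r : ℕ) [hpI : Fact p.Prime] [hrI : Fact r.Prime]
    (hp2 : p ≠ 2) (hr2 : r ≠ 2) {z : ZMod r} (hz : z ^ p = 1) (hord : orderOf z = p) :
    (∑ k ∈ range p, ((quadraticChar (ZMod p) ((k : ZMod p)) : ℤ) : ZMod r) * z ^ k) ^ 2
      = ((quadraticChar (ZMod p) (-1) : ℤ) : ZMod r) * p := by
  haveI : NeZero p := ⟨hpI.out.pos.ne'⟩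
  set χ' := (quadraticChar (ZMod p)).ringHomComp (Int.castRingHom (ZMod r)) with hχ'
  set ψ := AddChar.zmodChar p hz with hψ
  have hsum : ∑ k ∈ range p, ((quadraticChar (ZMod p) ((k : ZMod p)) : ℤ) : ZMod r) * z ^ k
      = gaussSum χ' ψ := by
    rw [gaussSum]
    apply sum_range_zmod'
    intro a
    simp only [hχ', hψ, MulChar.ringHomComp_apply, eq_intCast, AddChar.zmodChar_apply,
      ZMod.natCast_val, ZMod.cast_id]
  rw [hsum]
  have hquad := (quadraticChar_isQuadratic (ZMod p)).comp (Int.castRingHom (ZMod r))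
  have hne := comp_ne_one p r hp2 hr2
  have hprim : ψ.IsPrimitive := by
    have hpr : IsPrimitiveRoot z p := hord ▸ IsPrimitiveRoot.orderOf z
    exact AddChar.zmodChar_primitive_of_primitive_root p hpr
  rw [gaussSum_sq hne hquad hprim]
  simp only [hχ', MulChar.ringHomComp_apply, eq_intCast, ZMod.card]

/-- A quadratic-character sum against powers of `1` vanishes. -/
private lemma char_sum_triv (p r : ℕ) [hpI : Fact p.Prime] [hrI : Fact r.Prime]
    (hp2 : p ≠ 2) (hr2 : r ≠ 2) {z : ZMod r} (hz1 : z = 1) :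
    ∑ k ∈ range p, ((quadraticChar (ZMod p) ((k : ZMod p)) : ℤ) : ZMod r) * z ^ k = 0 := by
  haveI : NeZero p := ⟨hpI.out.pos.ne'⟩
  set χ' := (quadraticChar (ZMod p)).ringHomComp (Int.castRingHom (ZMod r)) with hχ'
  have hsum : ∑ k ∈ range p, ((quadraticChar (ZMod p) ((k : ZMod p)) : ℤ) : ZMod r) * z ^ k
      = ∑ a : ZMod p, χ' a := by
    apply sum_range_zmod'
    intro a
    rw [hz1, one_pow, mul_one]
    simp only [hχ', MulChar.ringHomComp_apply, eq_intCast, ZMod.natCast_val, ZMod.cast_id]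
  rw [hsum]
  exact MulChar.sum_eq_zero_of_ne_one (comp_ne_one p r hp2 hr2)

private lemma sum_multiples {M : Type*} [AddCommMonoid M] (p q : ℕ) (hq : 0 < q) (f : ℕ → M) :
    ∑ n ∈ range (p * q), (if q ∣ n then f n else 0) = ∑ k ∈ range p, f (k * q) := by
  rw [← Finset.sum_filter]
  refine Finset.sum_nbij' (fun n => n / q) (fun k => k * q) ?_ ?_ ?_ ?_ ?_
  · intro n hn
    rw [mem_filter, mem_range] at hn
    exact mem_range.mpr ((Nat.div_lt_iff_lt_mul hq).mpr hn.1)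
  · intro k hk
    rw [mem_range] at hk
    rw [mem_filter, mem_range]
    exact ⟨(Nat.mul_lt_mul_right hq).mpr hk, dvd_mul_left q k⟩
  · intro n hn
    rw [mem_filter] at hn
    exact Nat.div_mul_cancel hn.2
  · intro k _
    exact Nat.mul_div_cancel k hq
  · intro n hn
    rw [mem_filter] at hn
    rw [Nat.div_mul_cancel hn.2]

private lemma pow_eq_pow_of_mod_eq' {M : Type*} [Monoid M] {c : M} {n : ℕ} (h : c ^ n = 1)
    {a b : ℕ} (hab : a % n = b % n) : c ^ a = c ^ b := by
  have key : ∀ m : ℕ, c ^ m = c ^ (m % n) := by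
    intro m
    conv_lhs => rw [← Nat.div_add_mod m n]
    rw [pow_add, pow_mul, h, one_pow, one_mul]
  rw [key a, key b, hab]

private lemma sum_range_zmod'' {M : Type*} [AddCommMonoid M] (n : ℕ) [NeZero n]
    (F : ℕ → M) (G : ZMod n → M) (h : ∀ a : ZMod n, F a.val = G a) :
    ∑ i ∈ range n, F i = ∑ a : ZMod n, G a := by
  refine (Finset.sum_nbij' (fun i => ((i : ℕ) : ZMod n)) (fun a => a.val) ?_ ?_ ?_ ?_ ?_)
  · intro a _; exact mem_univ _
  · intro a _; exact mem_range.mpr (ZMod.val_lt a)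
  · intro a ha; exact ZMod.val_cast_of_lt (mem_range.mp ha)
  · intro a _; simp [ZMod.natCast_val, ZMod.cast_id]
  · intro a ha
    rw [← h ((a : ZMod n))]
    rw [ZMod.val_cast_of_lt (mem_range.mp ha)]

private lemma sum_crt_split (p q r : ℕ) [hpI : Fact p.Prime] [hqI : Fact q.Prime]
    [hrI : Fact r.Prime] (hpq : p ≠ q) (h2N : (2 : ZMod r) ^ (p * q) = 1) :
    ∑ n ∈ range (p * q),
        ((quadraticChar (ZMod p) ((n : ZMod p)) * quadraticChar (ZMod q) ((n : ZMod q)) : ℤ) : ZMod r) * 2 ^ n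
      = (((quadraticChar (ZMod p) ((q : ZMod p)) : ℤ) : ZMod r)
            * ∑ k ∈ range p, ((quadraticChar (ZMod p) ((k : ZMod p)) : ℤ) : ZMod r) * ((2 : ZMod r) ^ q) ^ k)
        * (((quadraticChar (ZMod q) ((p : ZMod q)) : ℤ) : ZMod r)
            * ∑ l ∈ range q, ((quadraticChar (ZMod q) ((l : ZMod q)) : ℤ) : ZMod r) * ((2 : ZMod r) ^ p) ^ l) := by
  haveI : NeZero p := ⟨hpI.out.pos.ne'⟩
  haveI : NeZero q := ⟨hqI.out.pos.ne'⟩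
  haveI : NeZero (p * q) := ⟨Nat.mul_ne_zero hpI.out.pos.ne' hqI.out.pos.ne'⟩
  have hcop : Nat.Coprime p q := (Nat.coprime_primes hpI.out hqI.out).mpr hpq
  have hqp0 : ((q : ZMod p)) ≠ 0 := by
    intro h
    exact hpq ((Nat.prime_dvd_prime_iff_eq hpI.out hqI.out).mp
      ((ZMod.natCast_eq_zero_iff q p).mp h))
  have hpq0 : ((p : ZMod q)) ≠ 0 := by
    intro h
    exact hpq ((Nat.prime_dvd_prime_iff_eq hqI.out hpI.out).mp
      ((ZMod.natCast_eq_zero_iff p q).mp h)).symm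
  set crt := ZMod.chineseRemainder hcop with hcrt
  have hecomp : ∀ u : ZMod (p * q), crt u = ((u.val : ZMod p), (u.val : ZMod q)) := by
    intro u
    have h0 : crt u = ZMod.castHom (show Nat.lcm p q ∣ p * q by simp [Nat.lcm_dvd_iff])
        (ZMod p × ZMod q) u := rfl
    rw [h0, ZMod.castHom_apply]
    have h1 : (ZMod.cast u : ZMod p × ZMod q) = ((u.val : ZMod p × ZMod q)) :=
      (ZMod.natCast_val u).symm
    rw [h1]
    exact Prod.ext (by simp) (by simp)
  set fp : ZMod p → ZMod r := fun a =>
    ((quadraticChar (ZMod p) a : ℤ) : ZMod r) * ((2 : ZMod r) ^ q) ^ (((q : ZMod p))⁻¹ * a).val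
    with hfp
  set fq : ZMod q → ZMod r := fun b =>
    ((quadraticChar (ZMod q) b : ℤ) : ZMod r) * ((2 : ZMod r) ^ p) ^ (((p : ZMod q))⁻¹ * b).val
    with hfq
  have hpoint : ∀ y : ZMod p × ZMod q,
      ((quadraticChar (ZMod p) (((crt.toEquiv.symm y).val : ZMod p))
        * quadraticChar (ZMod q) (((crt.toEquiv.symm y).val : ZMod q)) : ℤ) : ZMod r)
          * 2 ^ (crt.toEquiv.symm y).val
        = fp y.1 * fq y.2 := by
    intro y
    set u : ZMod (p * q) := crt.toEquiv.symm y with hudef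
    have hu : crt u = y := crt.apply_symm_apply y
    rw [hecomp u] at hu
    have hu1 : ((u.val : ZMod p)) = y.1 := by rw [← hu]
    have hu2 : ((u.val : ZMod q)) = y.2 := by rw [← hu]
    set v1 := (((q : ZMod p))⁻¹ * y.1).val with hv1
    set v2 := (((p : ZMod q))⁻¹ * y.2).val with hv2
    have hmodp : u.val ≡ q * v1 + p * v2 [MOD p] := by
      rw [← ZMod.natCast_eq_natCast_iff]
      push_cast
      rw [hu1, ZMod.natCast_self, zero_mul, add_zero, hv1, ZMod.natCast_val, ZMod.cast_id,
        mul_inv_cancel_left₀ hqp0]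
    have hmodq : u.val ≡ q * v1 + p * v2 [MOD q] := by
      rw [← ZMod.natCast_eq_natCast_iff]
      push_cast
      rw [hu2, ZMod.natCast_self, zero_mul, zero_add, hv2, ZMod.natCast_val, ZMod.cast_id,
        mul_inv_cancel_left₀ hpq0]
    have hmodN : u.val % (p * q) = (q * v1 + p * v2) % (p * q) :=
      (Nat.modEq_and_modEq_iff_modEq_mul hcop).mp ⟨hmodp, hmodq⟩
    have hpow : (2 : ZMod r) ^ u.val = ((2 : ZMod r) ^ q) ^ v1 * ((2 : ZMod r) ^ p) ^ v2 := by
      rw [pow_eq_pow_of_mod_eq' h2N hmodN, pow_add, pow_mul, pow_mul]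
    rw [hu1, hu2, hpow, hfp, hfq]
    push_cast
    ring
  calc ∑ n ∈ range (p * q),
      ((quadraticChar (ZMod p) ((n : ZMod p)) * quadraticChar (ZMod q) ((n : ZMod q)) : ℤ) : ZMod r) * 2 ^ n
      = ∑ m : ZMod (p * q),
        ((quadraticChar (ZMod p) ((m.val : ZMod p)) * quadraticChar (ZMod q) ((m.val : ZMod q)) : ℤ) : ZMod r)
          * 2 ^ m.val := by
        apply sum_range_zmod''
        intro a; rfl
    _ = ∑ y : ZMod p × ZMod q,
        ((quadraticChar (ZMod p) (((crt.toEquiv.symm y).val : ZMod p))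
          * quadraticChar (ZMod q) (((crt.toEquiv.symm y).val : ZMod q)) : ℤ) : ZMod r)
            * 2 ^ (crt.toEquiv.symm y).val := by
        rw [Equiv.sum_comp crt.toEquiv.symm
          (fun m : ZMod (p * q) =>
            ((quadraticChar (ZMod p) ((m.val : ZMod p))
              * quadraticChar (ZMod q) ((m.val : ZMod q)) : ℤ) : ZMod r) * 2 ^ m.val)]
    _ = ∑ y : ZMod p × ZMod q, fp y.1 * fq y.2 := Fintype.sum_congr _ _ hpoint
    _ = (∑ a : ZMod p, fp a) * (∑ b : ZMod q, fq b) := by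
        rw [Finset.sum_mul_sum, ← Fintype.sum_prod_type']
    _ = (((quadraticChar (ZMod p) ((q : ZMod p)) : ℤ) : ZMod r)
            * ∑ k ∈ range p, ((quadraticChar (ZMod p) ((k : ZMod p)) : ℤ) : ZMod r) * ((2 : ZMod r) ^ q) ^ k)
        * (((quadraticChar (ZMod q) ((p : ZMod q)) : ℤ) : ZMod r)
            * ∑ l ∈ range q, ((quadraticChar (ZMod q) ((l : ZMod q)) : ℤ) : ZMod r) * ((2 : ZMod r) ^ p) ^ l) := by
        congr 1
        · calc ∑ a : ZMod p, fp a = ∑ a : ZMod p, fp ((q : ZMod p) * a) :=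
              (Equiv.sum_comp (Equiv.mulLeft₀ (q : ZMod p) hqp0) fp).symm
          _ = ((quadraticChar (ZMod p) ((q : ZMod p)) : ℤ) : ZMod r)
              * ∑ a : ZMod p, ((quadraticChar (ZMod p) a : ℤ) : ZMod r) * ((2 : ZMod r) ^ q) ^ a.val := by
            rw [Finset.mul_sum]
            apply Fintype.sum_congr
            intro a
            rw [hfp]
            simp only []
            rw [map_mul, inv_mul_cancel_left₀ hqp0]
            push_cast
            ring
          _ = ((quadraticChar (ZMod p) ((q : ZMod p)) : ℤ) : ZMod r)
              * ∑ k ∈ range p, ((quadraticChar (ZMod p) ((k : ZMod p)) : ℤ) : ZMod r) * ((2 : ZMod r) ^ q) ^ k := by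
            congr 1
            symm
            apply sum_range_zmod''
            intro a
            rw [ZMod.natCast_val, ZMod.cast_id]
        · calc ∑ b : ZMod q, fq b = ∑ b : ZMod q, fq ((p : ZMod q) * b) :=
              (Equiv.sum_comp (Equiv.mulLeft₀ (p : ZMod q) hpq0) fq).symm
          _ = ((quadraticChar (ZMod q) ((p : ZMod q)) : ℤ) : ZMod r)
              * ∑ b : ZMod q, ((quadraticChar (ZMod q) b : ℤ) : ZMod r) * ((2 : ZMod r) ^ p) ^ b.val := by
            rw [Finset.mul_sum]
            apply Fintype.sum_congr
            intro b
            rw [hfq]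
            simp only []
            rw [map_mul, inv_mul_cancel_left₀ hpq0]
            push_cast
            ring
          _ = ((quadraticChar (ZMod q) ((p : ZMod q)) : ℤ) : ZMod r)
              * ∑ l ∈ range q, ((quadraticChar (ZMod q) ((l : ZMod q)) : ℤ) : ZMod r) * ((2 : ZMod r) ^ p) ^ l := by
            congr 1
            symm
            apply sum_range_zmod''
            intro b
            rw [ZMod.natCast_val, ZMod.cast_id]

private lemma orderOf_pow_zmod {r : ℕ} [Fact r.Prime] {x : ZMod r} (hx : x ≠ 0) (m : ℕ) :
    orderOf (x ^ m) = orderOf x / Nat.gcd (orderOf x) m := by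
  obtain ⟨u, hu⟩ := hx.isUnit
  have h1 : orderOf (u ^ m) = orderOf u / Nat.gcd (orderOf u) m := orderOf_pow u
  rw [← hu, ← Units.val_pow_eq_pow_val, orderOf_units, h1, orderOf_units]

theorem whiteman_two_adic_complexity_lower_bound
    (p q : ℕ) (hp : p.Prime) (hq : q.Prime) (hpq : p ≠ q)
    (hpo : Odd p) (hqo : Odd q)
    (hgcd : Nat.gcd (p - 1) (q - 1) = 2)
    (g : ℕ)
    (hgp : IsPrimitiveRoot (g : ZMod p) (p - 1))
    (hgq : IsPrimitiveRoot (g : ZMod q) (q - 1))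
    (x : ℕ) (hxlt : x < p * q) (hxp : x % p = g % p) (hxq : x % q = 1)
    (e : ℕ) (he : e = (p - 1) * (q - 1) / 2)
    (D : ℕ → Finset ℕ)
    (hD : ∀ i, D i = (Finset.range e).image (fun s => g ^ s * x ^ i % (p * q)))
    (Dp : ℕ → Finset ℕ)
    (hDp : ∀ i, Dp i = (Finset.range ((p - 1) / 2)).image (fun t => g ^ (2 * t + i) % p))
    (Dq : ℕ → Finset ℕ)
    (hDq : ∀ i, Dq i = (Finset.range ((q - 1) / 2)).image (fun t => g ^ (2 * t + i) % q))
    (DpQ : ℕ → Finset ℕ) (hDpQ : ∀ i, DpQ i = (Dp i).image (fun k => k * q % (p * q)))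
    (DqP : ℕ → Finset ℕ) (hDqP : ∀ i, DqP i = (Dq i).image (fun k => k * p % (p * q)))
    (C0 C1 : Finset ℕ)
    (hC0 : C0 = insert 0 (D 0 ∪ DpQ 0 ∪ DqP 0))
    (hC1 : C1 = D 1 ∪ DpQ 1 ∪ DqP 1)
    (s : ℕ → ℕ)
    (hs0 : ∀ i, i % (p * q) ∈ C0 → s i = 0)
    (hs1 : ∀ i, i % (p * q) ∈ C1 → s i = 1)
    (hp4 : p % 4 = 1) (hq4 : q % 4 = 3)
    (hsize : (((q : ℤ) - p).natAbs + 1) ^ 2 < p * q)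
    (S2 : ℕ) (hS2 : S2 = ∑ i ∈ Finset.range (p * q), s i * 2 ^ i) :
    p * q - p - q - 1 ≤
      Nat.log 2 ((2 ^ (p * q) - 1) / Nat.gcd (2 ^ (p * q) - 1) S2 + 1) := by
  haveI hpI : Fact p.Prime := ⟨hp⟩
  haveI hqI : Fact q.Prime := ⟨hq⟩
  haveI : NeZero p := ⟨hp.pos.ne'⟩
  haveI : NeZero q := ⟨hq.pos.ne'⟩
  have hp2 : p ≠ 2 := by omega
  have hq2 : q ≠ 2 := by omega
  have hp3 : 3 ≤ p := by have := hp.two_le; omega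
  have hq3 : 3 ≤ q := by have := hq.two_le; omega
  have hNpos : 0 < p * q := by positivity
  have hcop : Nat.Coprime p q := (Nat.coprime_primes hp hq).mpr hpq
  have hqp0 : ((q : ZMod p)) ≠ 0 := by
    intro h
    exact hpq ((Nat.prime_dvd_prime_iff_eq hp hq).mp
      ((ZMod.natCast_eq_zero_iff q p).mp h))
  have hpq0 : ((p : ZMod q)) ≠ 0 := by
    intro h
    exact hpq ((Nat.prime_dvd_prime_iff_eq hq hp).mp
      ((ZMod.natCast_eq_zero_iff p q).mp h)).symm
  -- the pointwise description of the sequence via quadratic characters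
  have hsval : ∀ n, n < p * q →
      2 * (s n : ℤ) +
        (quadraticChar (ZMod p) ((n : ZMod p)) * quadraticChar (ZMod q) ((n : ZMod q))
          + quadraticChar (ZMod p) ((q : ZMod p))
              * (if q ∣ n then quadraticChar (ZMod p) ((n : ZMod p)) else 0)
          + quadraticChar (ZMod q) ((p : ZMod q))
              * (if p ∣ n then quadraticChar (ZMod q) ((n : ZMod q)) else 0))
        = if n = 0 then 0 else 1 := by
    intro n hn
    by_cases hn0 : n = 0
    · subst hn0
      have hs00 : s 0 = 0 := hs0 0 (by
        rw [Nat.zero_mod, hC0]; exact Finset.mem_insert_self _ _)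
      rw [hs00]
      simp [quadraticChar_zero]
    · have hnotboth : ¬(p ∣ n ∧ q ∣ n) := by
        rintro ⟨h1, h2⟩
        have h3 : p * q ∣ n := hcop.mul_dvd_of_dvd_of_dvd h1 h2
        have := Nat.le_of_dvd (Nat.pos_of_ne_zero hn0) h3
        omega
      rw [if_neg hn0]
      by_cases hqn : q ∣ n
      · -- `n` is a nonzero multiple of `q`
        have hpn : ¬p ∣ n := fun h => hnotboth ⟨h, hqn⟩
        obtain ⟨k, hk⟩ := hqn
        have hk0 : k ≠ 0 := by rintro rfl; simp at hk; exact hn0 hk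
        have hklt : k < p := by
          by_contra h
          push_neg at h
          have h2 : q * p ≤ q * k := Nat.mul_le_mul_left q h
          rw [mul_comm q p] at h2
          omega
        have hnq0 : ((n : ZMod q)) = 0 := (ZMod.natCast_eq_zero_iff n q).mpr ⟨k, hk⟩
        have hkp0 : ((k : ZMod p)) ≠ 0 := by
          intro h
          exact hpn (hk ▸ Dvd.dvd.mul_left ((ZMod.natCast_eq_zero_iff k p).mp h) q)
        obtain ⟨a, ha⟩ := exists_dlog hgp hkp0
        have hnp : ((n : ZMod p)) = (q : ZMod p) * (k : ZMod p) := by rw [hk]; push_cast; ring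
        have hχp : quadraticChar (ZMod p) ((n : ZMod p))
            = quadraticChar (ZMod p) ((q : ZMod p)) * (-1) ^ a := by
          rw [hnp, map_mul, ← ha, quadChar_pow hp2 hgp]
        have hsq : quadraticChar (ZMod p) ((q : ZMod p))
            * quadraticChar (ZMod p) ((q : ZMod p)) = 1 := by
          have := quadraticChar_sq_one hqp0; rwa [sq] at this
        have hmul : k * q % (p * q) = n := by
          rw [Nat.mod_eq_of_lt ((Nat.mul_lt_mul_right (by omega : 0 < q)).mpr hklt), mul_comm]
          exact hk.symm
        rw [if_pos ⟨k, hk⟩, if_neg hpn, hnq0, quadraticChar_zero, hχp]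
        by_cases hpar : a % 2 = 0
        · obtain ⟨t, htlt, hteq⟩ :=
            mem_Dp_aux p hp hpo g hgp 0 k a (by norm_num) hklt ha.symm (by omega)
          have hmem : n ∈ C0 := by
            rw [hC0]
            apply Finset.mem_insert_of_mem
            apply Finset.mem_union_left
            apply Finset.mem_union_right
            rw [hDpQ 0]
            refine Finset.mem_image.mpr ⟨k, ?_, hmul⟩
            rw [hDp 0]
            exact Finset.mem_image.mpr ⟨t, Finset.mem_range.mpr htlt, hteq⟩
          have hs' : s n = 0 := hs0 n (by rwa [Nat.mod_eq_of_lt hn])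
          rw [hs', (Even.neg_one_pow (Nat.even_iff.mpr hpar) : ((-1 : ℤ)) ^ a = 1)]
          linear_combination hsq
        · obtain ⟨t, htlt, hteq⟩ :=
            mem_Dp_aux p hp hpo g hgp 1 k a (by norm_num) hklt ha.symm (by omega)
          have hmem : n ∈ C1 := by
            rw [hC1]
            apply Finset.mem_union_left
            apply Finset.mem_union_right
            rw [hDpQ 1]
            refine Finset.mem_image.mpr ⟨k, ?_, hmul⟩
            rw [hDp 1]
            exact Finset.mem_image.mpr ⟨t, Finset.mem_range.mpr htlt, hteq⟩
          have hs' : s n = 1 := hs1 n (by rwa [Nat.mod_eq_of_lt hn])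
          rw [hs', (Odd.neg_one_pow (Nat.odd_iff.mpr (by omega)) : ((-1 : ℤ)) ^ a = -1)]
          linear_combination -hsq
      · by_cases hpn : p ∣ n
        · -- `n` is a nonzero multiple of `p`
          obtain ⟨k, hk⟩ := hpn
          have hk0 : k ≠ 0 := by rintro rfl; simp at hk; exact hn0 hk
          have hklt : k < q := by
            by_contra h
            push_neg at h
            have h2 : p * q ≤ p * k := Nat.mul_le_mul_left p h
            omega
          have hnp0 : ((n : ZMod p)) = 0 := (ZMod.natCast_eq_zero_iff n p).mpr ⟨k, hk⟩
          have hkq0 : ((k : ZMod q)) ≠ 0 := by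
            intro h
            exact hqn (hk ▸ Dvd.dvd.mul_left ((ZMod.natCast_eq_zero_iff k q).mp h) p)
          obtain ⟨a, ha⟩ := exists_dlog hgq hkq0
          have hnq : ((n : ZMod q)) = (p : ZMod q) * (k : ZMod q) := by rw [hk]; push_cast; ring
          have hχq : quadraticChar (ZMod q) ((n : ZMod q))
              = quadraticChar (ZMod q) ((p : ZMod q)) * (-1) ^ a := by
            rw [hnq, map_mul, ← ha, quadChar_pow hq2 hgq]
          have hsq : quadraticChar (ZMod q) ((p : ZMod q))
              * quadraticChar (ZMod q) ((p : ZMod q)) = 1 := by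
            have := quadraticChar_sq_one hpq0; rwa [sq] at this
          have hmul : k * p % (p * q) = n := by
            rw [mul_comm p q]
            rw [Nat.mod_eq_of_lt ((Nat.mul_lt_mul_right (by omega : 0 < p)).mpr hklt), mul_comm]
            exact hk.symm
          rw [if_neg hqn, if_pos ⟨k, hk⟩, hnp0, quadraticChar_zero, hχq]
          by_cases hpar : a % 2 = 0
          · obtain ⟨t, htlt, hteq⟩ :=
              mem_Dp_aux q hq hqo g hgq 0 k a (by norm_num) hklt ha.symm (by omega)
            have hmem : n ∈ C0 := by
              rw [hC0]
              apply Finset.mem_insert_of_mem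
              apply Finset.mem_union_right
              rw [hDqP 0]
              refine Finset.mem_image.mpr ⟨k, ?_, hmul⟩
              rw [hDq 0]
              exact Finset.mem_image.mpr ⟨t, Finset.mem_range.mpr htlt, hteq⟩
            have hs' : s n = 0 := hs0 n (by rwa [Nat.mod_eq_of_lt hn])
            rw [hs', (Even.neg_one_pow (Nat.even_iff.mpr hpar) : ((-1 : ℤ)) ^ a = 1)]
            linear_combination hsq
          · obtain ⟨t, htlt, hteq⟩ :=
              mem_Dp_aux q hq hqo g hgq 1 k a (by norm_num) hklt ha.symm (by omega)
            have hmem : n ∈ C1 := by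
              rw [hC1]
              apply Finset.mem_union_right
              rw [hDqP 1]
              refine Finset.mem_image.mpr ⟨k, ?_, hmul⟩
              rw [hDq 1]
              exact Finset.mem_image.mpr ⟨t, Finset.mem_range.mpr htlt, hteq⟩
            have hs' : s n = 1 := hs1 n (by rwa [Nat.mod_eq_of_lt hn])
            rw [hs', (Odd.neg_one_pow (Nat.odd_iff.mpr (by omega)) : ((-1 : ℤ)) ^ a = -1)]
            linear_combination -hsq
        · -- `n` is a unit
          have hnp0 : ((n : ZMod p)) ≠ 0 :=
            fun h => hpn ((ZMod.natCast_eq_zero_iff n p).mp h)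
          have hnq0 : ((n : ZMod q)) ≠ 0 :=
            fun h => hqn ((ZMod.natCast_eq_zero_iff n q).mp h)
          obtain ⟨a, ha⟩ := exists_dlog hgp hnp0
          obtain ⟨b, hb⟩ := exists_dlog hgq hnq0
          have hχp : quadraticChar (ZMod p) ((n : ZMod p)) = (-1) ^ a := by
            rw [← ha, quadChar_pow hp2 hgp]
          have hχq : quadraticChar (ZMod q) ((n : ZMod q)) = (-1) ^ b := by
            rw [← hb, quadChar_pow hq2 hgq]
          rw [if_neg hqn, if_neg hpn, mul_zero, mul_zero, add_zero, add_zero, hχp, hχq,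
            ← pow_add]
          by_cases hpar : (a + b) % 2 = 0
          · obtain ⟨s0', hs0lt, hs0eq⟩ :=
              mem_D_aux p q hp hq hpq hpo hqo hgcd g x e hgp hgq hxp hxq he
                0 n a b (by norm_num) hn ha.symm hb.symm (by omega)
            have hmem : n ∈ C0 := by
              rw [hC0]
              apply Finset.mem_insert_of_mem
              apply Finset.mem_union_left
              apply Finset.mem_union_left
              rw [hD 0]
              exact Finset.mem_image.mpr ⟨s0', Finset.mem_range.mpr hs0lt, hs0eq⟩
            have hs' : s n = 0 := hs0 n (by rwa [Nat.mod_eq_of_lt hn])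
            rw [hs', Even.neg_one_pow (Nat.even_iff.mpr hpar)]
            ring
          · obtain ⟨s0', hs0lt, hs0eq⟩ :=
              mem_D_aux p q hp hq hpq hpo hqo hgcd g x e hgp hgq hxp hxq he
                1 n a b (by norm_num) hn ha.symm hb.symm (by omega)
            have hmem : n ∈ C1 := by
              rw [hC1]
              apply Finset.mem_union_left
              apply Finset.mem_union_left
              rw [hD 1]
              exact Finset.mem_image.mpr ⟨s0', Finset.mem_range.mpr hs0lt, hs0eq⟩
            have hs' : s n = 1 := hs1 n (by rwa [Nat.mod_eq_of_lt hn])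
            rw [hs', Odd.neg_one_pow (Nat.odd_iff.mpr (by omega))]
            ring
  -- the integer identity
  have hkey : 2 * (S2 : ℤ) + ∑ n ∈ Finset.range (p * q),
      (quadraticChar (ZMod p) ((n : ZMod p)) * quadraticChar (ZMod q) ((n : ZMod q))
        + quadraticChar (ZMod p) ((q : ZMod p))
            * (if q ∣ n then quadraticChar (ZMod p) ((n : ZMod p)) else 0)
        + quadraticChar (ZMod q) ((p : ZMod q))
            * (if p ∣ n then quadraticChar (ZMod q) ((n : ZMod q)) else 0)) * 2 ^ n
      = 2 ^ (p * q) - 2 := by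
    have hS2int : (S2 : ℤ) = ∑ n ∈ Finset.range (p * q), (s n : ℤ) * 2 ^ n := by
      rw [hS2]; push_cast; ring
    calc 2 * (S2 : ℤ) + ∑ n ∈ Finset.range (p * q),
        (quadraticChar (ZMod p) ((n : ZMod p)) * quadraticChar (ZMod q) ((n : ZMod q))
          + quadraticChar (ZMod p) ((q : ZMod p))
              * (if q ∣ n then quadraticChar (ZMod p) ((n : ZMod p)) else 0)
          + quadraticChar (ZMod q) ((p : ZMod q))
              * (if p ∣ n then quadraticChar (ZMod q) ((n : ZMod q)) else 0)) * 2 ^ n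
        = ∑ n ∈ Finset.range (p * q), (2 * (s n : ℤ)
            + (quadraticChar (ZMod p) ((n : ZMod p)) * quadraticChar (ZMod q) ((n : ZMod q))
              + quadraticChar (ZMod p) ((q : ZMod p))
                  * (if q ∣ n then quadraticChar (ZMod p) ((n : ZMod p)) else 0)
              + quadraticChar (ZMod q) ((p : ZMod q))
                  * (if p ∣ n then quadraticChar (ZMod q) ((n : ZMod q)) else 0))) * 2 ^ n := by
          rw [hS2int, Finset.mul_sum, ← Finset.sum_add_distrib]
          exact Finset.sum_congr rfl fun n _ => by ring
      _ = ∑ n ∈ Finset.range (p * q), (if n = 0 then (0 : ℤ) else 1) * 2 ^ n :=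
          Finset.sum_congr rfl fun n hn => by rw [hsval n (Finset.mem_range.mp hn)]
      _ = 2 ^ (p * q) - 2 := by
          have hsplit : ∀ n ∈ Finset.range (p * q),
              ((if n = 0 then (0 : ℤ) else 1) * 2 ^ n) = 2 ^ n - (if n = 0 then 1 else 0) := by
            intro n _; by_cases h : n = 0 <;> simp [h]
          rw [Finset.sum_congr rfl hsplit, Finset.sum_sub_distrib]
          have hgeo : ∑ n ∈ Finset.range (p * q), (2 : ℤ) ^ n = 2 ^ (p * q) - 1 := by
            have h := geom_sum_mul (2 : ℤ) (p * q)
            simpa using h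
          have hone : ∑ n ∈ Finset.range (p * q), (if n = 0 then (1 : ℤ) else 0) = 1 := by
            rw [Finset.sum_ite_eq' (Finset.range (p * q)) 0 (fun _ => (1 : ℤ))]
            simp [Finset.mem_range, hNpos]
          rw [hgeo, hone]; ring
  -- the gcd is one
  have hgcd1 : Nat.gcd (2 ^ (p * q) - 1) S2 = 1 := by
    by_contra hne1
    set r := (Nat.gcd (2 ^ (p * q) - 1) S2).minFac with hrdef
    have hrprime : r.Prime := Nat.minFac_prime hne1
    haveI hrI : Fact r.Prime := ⟨hrprime⟩
    have hrdvd1 : r ∣ 2 ^ (p * q) - 1 := (Nat.minFac_dvd _).trans (Nat.gcd_dvd_left _ _)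
    have hrdvd2 : r ∣ S2 := (Nat.minFac_dvd _).trans (Nat.gcd_dvd_right _ _)
    have h2Nge : 1 ≤ 2 ^ (p * q) := Nat.one_le_two_pow
    have hrodd : r ≠ 2 := by
      intro h
      have h2d : 2 ∣ 2 ^ (p * q) := dvd_pow_self 2 hNpos.ne'
      have h1 := Nat.dvd_sub h2d (h ▸ hrdvd1)
      rw [Nat.sub_sub_self h2Nge] at h1
      exact absurd h1 (by norm_num)
    have hr3 : 3 ≤ r := by have := hrprime.two_le; omega
    have h2N0 : (2 : ZMod r) ^ (p * q) = 1 := by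
      have hcast : ((2 ^ (p * q) - 1 : ℕ) : ZMod r) = 0 :=
        (ZMod.natCast_eq_zero_iff _ r).mpr hrdvd1
      rw [Nat.cast_sub h2Nge] at hcast
      push_cast at hcast
      linear_combination hcast
    have hS2r : ((S2 : ℕ) : ZMod r) = 0 := (ZMod.natCast_eq_zero_iff _ r).mpr hrdvd2
    have h20 : (2 : ZMod r) ≠ 0 := by
      intro h
      have h1 : ((2 : ℕ) : ZMod r) = 0 := by push_cast; exact h
      have h2 := Nat.le_of_dvd (by norm_num) ((ZMod.natCast_eq_zero_iff 2 r).mp h1)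
      omega
    have hmodr := congrArg (fun z : ℤ => (z : ZMod r)) hkey
    push_cast [apply_ite (fun z : ℤ => (z : ZMod r))] at hmodr
    rw [hS2r, h2N0] at hmodr
    set Sp := ∑ k ∈ Finset.range p,
      ((quadraticChar (ZMod p) ((k : ZMod p)) : ℤ) : ZMod r) * ((2 : ZMod r) ^ q) ^ k with hSp
    set Sq := ∑ l ∈ Finset.range q,
      ((quadraticChar (ZMod q) ((l : ZMod q)) : ℤ) : ZMod r) * ((2 : ZMod r) ^ p) ^ l with hSq
    set cp := ((quadraticChar (ZMod p) ((q : ZMod p)) : ℤ) : ZMod r) with hcp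
    set cq := ((quadraticChar (ZMod q) ((p : ZMod q)) : ℤ) : ZMod r) with hcq
    have hABC : ∑ n ∈ Finset.range (p * q),
        (((quadraticChar (ZMod p) ((n : ZMod p)) : ℤ) : ZMod r)
            * ((quadraticChar (ZMod q) ((n : ZMod q)) : ℤ) : ZMod r)
          + cp * (if q ∣ n then ((quadraticChar (ZMod p) ((n : ZMod p)) : ℤ) : ZMod r) else 0)
          + cq * (if p ∣ n then ((quadraticChar (ZMod q) ((n : ZMod q)) : ℤ) : ZMod r) else 0))
          * (2 : ZMod r) ^ n
        = (cp * Sp) * (cq * Sq) + cp * (cp * Sp) + cq * (cq * Sq) := by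
      have hterm : ∀ n : ℕ, (((quadraticChar (ZMod p) ((n : ZMod p)) : ℤ) : ZMod r)
            * ((quadraticChar (ZMod q) ((n : ZMod q)) : ℤ) : ZMod r)
          + cp * (if q ∣ n then ((quadraticChar (ZMod p) ((n : ZMod p)) : ℤ) : ZMod r) else 0)
          + cq * (if p ∣ n then ((quadraticChar (ZMod q) ((n : ZMod q)) : ℤ) : ZMod r) else 0))
          * (2 : ZMod r) ^ n
          = ((quadraticChar (ZMod p) ((n : ZMod p)) * quadraticChar (ZMod q) ((n : ZMod q)) : ℤ) : ZMod r)
              * (2 : ZMod r) ^ n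
            + cp * (if q ∣ n then ((quadraticChar (ZMod p) ((n : ZMod p)) : ℤ) : ZMod r)
                * (2 : ZMod r) ^ n else 0)
            + cq * (if p ∣ n then ((quadraticChar (ZMod q) ((n : ZMod q)) : ℤ) : ZMod r)
                * (2 : ZMod r) ^ n else 0) := by
        intro n
        by_cases h1 : q ∣ n <;> by_cases h2 : p ∣ n <;> simp [h1, h2] <;> push_cast <;> ring
      have hA := sum_crt_split p q r hpq h2N0
      have hB : ∑ n ∈ Finset.range (p * q),
          (if q ∣ n then ((quadraticChar (ZMod p) ((n : ZMod p)) : ℤ) : ZMod r)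
            * (2 : ZMod r) ^ n else 0) = cp * Sp := by
        rw [sum_multiples p q (by omega : 0 < q)
          (fun m => ((quadraticChar (ZMod p) ((m : ZMod p)) : ℤ) : ZMod r) * (2 : ZMod r) ^ m)]
        rw [hcp, hSp, Finset.mul_sum]
        apply Finset.sum_congr rfl
        intro k _
        have hc : ((k * q : ℕ) : ZMod p) = (k : ZMod p) * (q : ZMod p) := by push_cast; ring
        rw [hc, map_mul, mul_comm k q, pow_mul]
        push_cast
        ring
      have hC : ∑ n ∈ Finset.range (p * q),
          (if p ∣ n then ((quadraticChar (ZMod q) ((n : ZMod q)) : ℤ) : ZMod r)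
            * (2 : ZMod r) ^ n else 0) = cq * Sq := by
        have hmq := sum_multiples q p (by omega : 0 < p)
          (fun m => ((quadraticChar (ZMod q) ((m : ZMod q)) : ℤ) : ZMod r) * (2 : ZMod r) ^ m)
        rw [mul_comm q p] at hmq
        rw [hmq, hcq, hSq, Finset.mul_sum]
        apply Finset.sum_congr rfl
        intro l _
        have hc : ((l * p : ℕ) : ZMod q) = (l : ZMod q) * (p : ZMod q) := by push_cast; ring
        rw [hc, map_mul, mul_comm l p, pow_mul]
        push_cast
        ring
      rw [Finset.sum_congr rfl (fun n _ => hterm n), Finset.sum_add_distrib,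
        Finset.sum_add_distrib, ← Finset.mul_sum, ← Finset.mul_sum, hA, hB, hC,
        hcp, hSp, hcq, hSq]
    rw [hABC] at hmodr
    have hcp2 : cp * cp = 1 := by
      have h := quadraticChar_sq_one hqp0
      calc cp * cp = ((quadraticChar (ZMod p) ((q : ZMod p)) ^ 2 : ℤ) : ZMod r) := by
            rw [hcp]; push_cast; ring
      _ = 1 := by rw [h]; norm_num
    have hcq2 : cq * cq = 1 := by
      have h := quadraticChar_sq_one hpq0
      calc cq * cq = ((quadraticChar (ZMod q) ((p : ZMod q)) ^ 2 : ℤ) : ZMod r) := by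
            rw [hcq]; push_cast; ring
      _ = 1 := by rw [h]; norm_num
    have hstar : (cp * Sp) * (cq * Sq) + Sp + Sq = -1 := by
      linear_combination hmodr - Sp * hcp2 - Sq * hcq2
    have hodvd : orderOf (2 : ZMod r) ∣ p * q := orderOf_dvd_of_pow_eq_one h2N0
    have ho1 : orderOf (2 : ZMod r) ≠ 1 := by
      intro h
      have h2 := orderOf_eq_one_iff.mp h
      have h1 : ((1 : ℕ) : ZMod r) = 0 := by push_cast; linear_combination h2
      have h3 := Nat.le_of_dvd one_pos ((ZMod.natCast_eq_zero_iff 1 r).mp h1)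
      omega
    have hordr : orderOf (2 : ZMod r) ∣ r - 1 :=
      orderOf_dvd_of_pow_eq_one (ZMod.pow_card_sub_one_eq_one h20)
    have hχ4p : ((quadraticChar (ZMod p) (-1) : ℤ) : ZMod r) = 1 := by
      rw [quadraticChar_neg_one (by rw [ZMod.ringChar_zmod_n]; exact hp2), ZMod.card,
        ZMod.χ₄_nat_one_mod_four hp4]
      norm_num
    have hχ4q : ((quadraticChar (ZMod q) (-1) : ℤ) : ZMod r) = -1 := by
      rw [quadraticChar_neg_one (by rw [ZMod.ringChar_zmod_n]; exact hq2), ZMod.card,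
        ZMod.χ₄_nat_three_mod_four hq4]
      push_cast
      ring
    -- helper: from `Sp = -1` and order p*q or p we derive a contradiction
    have hSp_contra : orderOf ((2 : ZMod r) ^ q) = p → Sp = -1 → r ∣ p - 1 := by
      intro hordzp hSpm1
      have hzp_pow : ((2 : ZMod r) ^ q) ^ p = 1 := by
        rw [← pow_mul, mul_comm q p]; exact h2N0
      have hSp2 := char_sum_sq p r hp2 hrodd hzp_pow hordzp
      rw [hχ4p, one_mul, ← hSp, hSpm1] at hSp2
      have hp1r : ((p - 1 : ℕ) : ZMod r) = 0 := by
        rw [Nat.cast_sub (by omega : 1 ≤ p)]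
        push_cast
        linear_combination -hSp2
      exact (ZMod.natCast_eq_zero_iff _ r).mp hp1r
    have hSq_contra : orderOf ((2 : ZMod r) ^ p) = q → Sq = -1 → r ∣ q + 1 := by
      intro hordzq hSqm1
      have hzq_pow : ((2 : ZMod r) ^ p) ^ q = 1 := by
        rw [← pow_mul]; exact h2N0
      have hSq2 := char_sum_sq q r hq2 hrodd hzq_pow hordzq
      rw [hχ4q, ← hSq, hSqm1] at hSq2
      have hq1r : ((q + 1 : ℕ) : ZMod r) = 0 := by
        push_cast
        linear_combination hSq2
      exact (ZMod.natCast_eq_zero_iff _ r).mp hq1r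
    rcases dvd_mul_prime_cases hp hq hpq hodvd with h1 | hop | hoq | hoN
    · exact ho1 h1
    · -- orderOf 2 = p
      have hzq1 : (2 : ZMod r) ^ p = 1 := by rw [← hop]; exact pow_orderOf_eq_one 2
      have hSq0 : Sq = 0 := by rw [hSq]; exact char_sum_triv q r hq2 hrodd hzq1
      have hSpm1 : Sp = -1 := by
        rw [hSq0] at hstar
        linear_combination hstar
      have hordzp : orderOf ((2 : ZMod r) ^ q) = p := by
        rw [orderOf_pow_zmod h20 q, hop, hcop, Nat.div_one]
      have hrdvdp := hSp_contra hordzp hSpm1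
      have hrlep : r ≤ p - 1 := Nat.le_of_dvd (by omega) hrdvdp
      have hpler : p ≤ r - 1 := Nat.le_of_dvd (by omega) (hop ▸ hordr)
      omega
    · -- orderOf 2 = q
      have hzp1 : (2 : ZMod r) ^ q = 1 := by rw [← hoq]; exact pow_orderOf_eq_one 2
      have hSp0 : Sp = 0 := by rw [hSp]; exact char_sum_triv p r hp2 hrodd hzp1
      have hSqm1 : Sq = -1 := by
        rw [hSp0] at hstar
        linear_combination hstar
      have hordzq : orderOf ((2 : ZMod r) ^ p) = q := by
        rw [orderOf_pow_zmod h20 p, hoq, hcop.symm, Nat.div_one]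
      have hrdvdq := hSq_contra hordzq hSqm1
      have hrleq : r ≤ q + 1 := Nat.le_of_dvd (by omega) hrdvdq
      have hqler : q ≤ r - 1 := Nat.le_of_dvd (by omega) (hoq ▸ hordr)
      have hreq : r = q + 1 := by omega
      obtain ⟨c, hc⟩ := hqo
      have h2r : 2 ∣ r := ⟨c + 1, by omega⟩
      have := (Nat.prime_dvd_prime_iff_eq Nat.prime_two hrprime).mp h2r
      omega
    · -- orderOf 2 = p * q
      have hordzp : orderOf ((2 : ZMod r) ^ q) = p := by
        rw [orderOf_pow_zmod h20 q, hoN, Nat.gcd_eq_right (dvd_mul_left q p),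
          Nat.mul_div_cancel _ (by omega : 0 < q)]
      have hordzq : orderOf ((2 : ZMod r) ^ p) = q := by
        rw [orderOf_pow_zmod h20 p, hoN, Nat.gcd_eq_right (dvd_mul_right p q),
          Nat.mul_div_cancel_left _ (by omega : 0 < p)]
      have hrec : quadraticChar (ZMod p) ((q : ZMod p)) * quadraticChar (ZMod q) ((p : ZMod q)) = 1 := by
        have h1 := legendreSym.quadratic_reciprocity_one_mod_four hp4 hq2
        have h2 : legendreSym p ((q : ℕ) : ℤ) = quadraticChar (ZMod p) ((q : ZMod p)) := by
          simp [legendreSym]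
        have h3 : legendreSym q ((p : ℕ) : ℤ) = quadraticChar (ZMod q) ((p : ZMod q)) := by
          simp [legendreSym]
        have h4 := legendreSym.sq_one p (a := ((q : ℕ) : ℤ)) (by push_cast; exact hqp0)
        rw [← h2, ← h3, ← h1]
        linear_combination (legendreSym q ((p : ℕ) : ℤ) + legendreSym p ((q : ℕ) : ℤ)) * h1 + h4
      have hcpcq : cp * cq = 1 := by
        calc cp * cq
            = ((quadraticChar (ZMod p) ((q : ZMod p))
                * quadraticChar (ZMod q) ((p : ZMod q)) : ℤ) : ZMod r) := by
              rw [hcp, hcq]; push_cast; ring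
        _ = 1 := by rw [hrec]; norm_num
      have hfac : (Sp + 1) * (Sq + 1) = 0 := by
        linear_combination hstar - Sp * Sq * hcpcq
      have hNler : p * q ≤ r - 1 := Nat.le_of_dvd (by omega) (hoN ▸ hordr)
      rcases mul_eq_zero.mp hfac with hSpm1 | hSqm1
      · have hSpm1' : Sp = -1 := by linear_combination hSpm1
        have hrdvdp := hSp_contra hordzp hSpm1'
        have hrlep : r ≤ p - 1 := Nat.le_of_dvd (by omega) hrdvdp
        have hplt : p - 1 < p * q := by
          calc p - 1 < p := by omega
          _ ≤ p * q := Nat.le_mul_of_pos_right p (by omega)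
        omega
      · have hSqm1' : Sq = -1 := by linear_combination hSqm1
        have hrdvdq := hSq_contra hordzq hSqm1'
        have hrleq : r ≤ q + 1 := Nat.le_of_dvd (by omega) hrdvdq
        have hqlt : q < p * q := by
          have h9 : 1 * q < p * q := (Nat.mul_lt_mul_right (by omega : 0 < q)).mpr (by omega)
          omega
        omega
  -- conclusion
  rw [hgcd1, Nat.div_one, Nat.sub_add_cancel (Nat.one_le_two_pow), Nat.log_pow one_lt_two]
  have := Nat.sub_le (p * q) p
  omega
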